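/- Let J be a monomial ideal in S = K[x_1,...,x_n] with decomposition J = Σ_{j=0}^{α} x_1^j · (I_j · S), I_j = (J : x_1^j) ∩ T where T = K[x_2,...,x_n]. Then for every integer s ≥ 0, the Hilbert function satisfies h_{S/J}(s) = Σ_{j=0}^{α−1} h_{T/I_j}(s−j) + h_{S/(I_α·S)}(s−α). -/

import Mathlib

set_option maxHeartbeats 1600000


open MvPolynomial

/-- A monomial ideal: an ideal generated by monomials. -/
def IsMonomialIdeal {K : Type} [Field K] {m : ℕ} (J : Ideal (MvPolynomial (Fin m) K)) : Prop :=
  ∃ G : Set (Fin m →₀ ℕ), J = Ideal.span ((fun d => (monomial d (1 : K))) '' G)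

/-- `d` is the exponent vector of a minimal monomial generator of the monomial ideal `J`. -/
def IsMinGen {K : Type} [Field K] {m : ℕ} (J : Ideal (MvPolynomial (Fin m) K))
    (d : Fin m →₀ ℕ) : Prop :=
  (monomial d (1 : K)) ∈ J ∧
    ∀ i : Fin m, 0 < d i → (monomial (d - Finsupp.single i 1) (1 : K)) ∉ J

/-- Borel-fixed monomial ideal: stable under the moves `m ↦ (x_j/x_i)·m` for `j < i`. -/
def IsBorelFixed {K : Type} [Field K] {m : ℕ} (J : Ideal (MvPolynomial (Fin m) K)) : Prop :=
  IsMonomialIdeal J ∧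
    ∀ d : Fin m →₀ ℕ, (monomial d (1 : K)) ∈ J → ∀ i j : Fin m, j < i → 0 < d i →
      (monomial (d - Finsupp.single i 1 + Finsupp.single j 1) (1 : K)) ∈ J

/-- The inclusion `K[x_2,...,x_{n+1}] → K[x_1,...,x_{n+1}]` (variable index 0 is `x_1`). -/
noncomputable def varShift (K : Type) [Field K] (n : ℕ) :
    MvPolynomial (Fin n) K →ₐ[K] MvPolynomial (Fin (n + 1)) K :=
  rename Fin.succ

/-- `I_j = (J : x_1^j) ∩ K[x_2,...,x_{n+1}]`, an ideal of `T = K[x_2,...,x_{n+1}]`. -/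
noncomputable def sliceIdeal {K : Type} [Field K] {n : ℕ}
    (J : Ideal (MvPolynomial (Fin (n + 1)) K)) (j : ℕ) : Ideal (MvPolynomial (Fin n) K) :=
  Ideal.comap (varShift K n) (J.colon (Ideal.span {(X 0 : MvPolynomial (Fin (n + 1)) K) ^ j}))

/-- The Hilbert function of `S/J`: the `K`-dimension of the degree `s` part. -/
noncomputable def hilb {K : Type} [Field K] {m : ℕ}
    (J : Ideal (MvPolynomial (Fin m) K)) (s : ℕ) : ℕ :=
  Module.finrank K (homogeneousSubmodule (Fin m) K s) -
    Module.finrank K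
      (homogeneousSubmodule (Fin m) K s ⊓ Submodule.restrictScalars K J :
        Submodule K (MvPolynomial (Fin m) K))

/-- A homogeneous ideal (with respect to total degree). -/
def IsHomogeneousIdeal {K : Type} [Field K] {m : ℕ}
    (I : Ideal (MvPolynomial (Fin m) K)) : Prop :=
  ∀ p ∈ I, ∀ k : ℕ, (homogeneousComponent k p) ∈ I

/-- `α` is the initial degree of `J`: the least degree of a nonzero (homogeneous) element. -/
def IsInitialDegree {K : Type} [Field K] {m : ℕ}
    (J : Ideal (MvPolynomial (Fin m) K)) (α : ℕ) : Prop :=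
  IsLeast {k : ℕ | ∃ p ∈ J, p ≠ 0 ∧ MvPolynomial.IsHomogeneous p k} α

/-- The height (codimension) of an ideal: the infimum of heights of primes containing it. -/
noncomputable def idealHeight {R : Type} [CommRing R] (I : Ideal R) : ℕ∞ :=
  ⨅ (P : PrimeSpectrum R) (_ : I ≤ P.asIdeal), Order.height P

/-- `S/J` is Cohen-Macaulay: there is a regular sequence inside the irrelevant maximal
ideal of length equal to the Krull dimension of `S/J`. -/
def IsCMQuotient {K : Type} [Field K] {m : ℕ} (J : Ideal (MvPolynomial (Fin m) K)) : Prop :=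
  ∃ rs : List (MvPolynomial (Fin m) K),
    (∀ f ∈ rs, f ∈ Ideal.span (Set.range (X : Fin m → MvPolynomial (Fin m) K))) ∧
    RingTheory.Sequence.IsRegular (MvPolynomial (Fin m) K ⧸ J) rs ∧
    (rs.length : WithBot ℕ∞) = ringKrullDim (MvPolynomial (Fin m) K ⧸ J)

/-- An unmixed ideal: all associated primes of `R/I` have the same height, namely that of `I`. -/
def IsUnmixed {K : Type} [Field K] {m : ℕ} (I : Ideal (MvPolynomial (Fin m) K)) : Prop :=
  ∀ P ∈ associatedPrimes (MvPolynomial (Fin m) K) (MvPolynomial (Fin m) K ⧸ I),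
    idealHeight P = idealHeight I

/-- Degree-lexicographic order on exponent vectors: `d > e`. -/
def DegLexGT {m : ℕ} (d e : Fin m →₀ ℕ) : Prop :=
  (e.sum fun _ k => k) < (d.sum fun _ k => k) ∨
    ((d.sum fun _ k => k) = (e.sum fun _ k => k) ∧
      ∃ i : Fin m, (∀ k < i, d k = e k) ∧ e i < d i)

/-- A lex-segment monomial ideal. -/
def IsLexSegment {K : Type} [Field K] {m : ℕ} (J : Ideal (MvPolynomial (Fin m) K)) : Prop :=
  IsMonomialIdeal J ∧
    ∀ d e : Fin m →₀ ℕ, (d.sum fun _ k => k) = (e.sum fun _ k => k) →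
      DegLexGT d e → (monomial e (1 : K)) ∈ J → (monomial d (1 : K)) ∈ J

/-- `macaulayBound d a = a^{⟨d⟩}`, the Macaulay upper bound computed from the `d`-th
binomial expansion of `a`. -/
def macaulayBound : ℕ → ℕ → ℕ
  | _, 0 => 0
  | 0, _ + 1 => 0
  | d + 1, a + 1 =>
    let k := Nat.findGreatest (fun k => Nat.choose k (d + 1) ≤ a + 1) (a + d + 2)
    Nat.choose (k + 1) (d + 2) + macaulayBound d (a + 1 - Nat.choose k (d + 1))

/-- The first difference of a numerical function (with `f(-1) = 0`). -/
def delta (f : ℕ → ℤ) : ℕ → ℤ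
  | 0 => f 0
  | n + 1 => f (n + 1) - f n

/-- An O-sequence: `f(0) = 1`, nonnegative, satisfying Macaulay's growth condition. -/
def IsOSequence (f : ℕ → ℤ) : Prop :=
  f 0 = 1 ∧ (∀ t, 0 ≤ f t) ∧ ∀ t, 1 ≤ t → f (t + 1) ≤ (macaulayBound t (f t).toNat : ℤ)


namespace HilbAux

open Finset

open scoped Classical

variable {K : Type} [Field K]

noncomputable def Dset (m s : ℕ) : Finset (Fin m →₀ ℕ) := Finset.finsuppAntidiag Finset.univ s

lemma degree_eq_sum_univ {m : ℕ} (d : Fin m →₀ ℕ) : d.degree = ∑ i, d i :=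
  Finset.sum_subset (Finset.subset_univ _) (fun i _ hi => Finsupp.notMem_support_iff.mp hi)

lemma mem_Dset {m s : ℕ} {d : Fin m →₀ ℕ} : d ∈ Dset m s ↔ d.degree = s := by
  simp [Dset, Finset.mem_finsuppAntidiag, degree_eq_sum_univ]

lemma degree_cons {n : ℕ} (j : ℕ) (e : Fin n →₀ ℕ) :
    (Finsupp.cons j e).degree = j + e.degree := by
  rw [degree_eq_sum_univ, degree_eq_sum_univ, Fin.sum_univ_succ]
  simp

lemma zero_le_degree {m : ℕ} (d : Fin (m+1) →₀ ℕ) : d 0 ≤ d.degree := by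
  rw [degree_eq_sum_univ]
  exact Finset.single_le_sum (fun a _ => Nat.zero_le _) (Finset.mem_univ 0)

lemma cons_eq_add {n : ℕ} (j : ℕ) (e : Fin n →₀ ℕ) :
    Finsupp.cons j e = Finsupp.mapDomain Fin.succ e + Finsupp.single 0 j := by
  ext a
  refine Fin.cases ?_ (fun i => ?_) a
  · rw [Finsupp.cons_zero, Finsupp.add_apply,
      Finsupp.mapDomain_notin_range _ _ (by simp [Fin.succ_ne_zero]), Finsupp.single_eq_same,
      zero_add]
  · rw [Finsupp.cons_succ, Finsupp.add_apply,
      Finsupp.mapDomain_apply (Fin.succ_injective n),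
      Finsupp.single_eq_of_ne' (Fin.succ_ne_zero i).symm, add_zero]

lemma card_filter_irrel {γ : Type} (D : Finset γ) (p : γ → Prop) (i1 i2 : DecidablePred p) :
    (@Finset.filter γ p i1 D).card = (@Finset.filter γ p i2 D).card := by
  congr!

def MClosed {m : ℕ} (J : Ideal (MvPolynomial (Fin m) K)) : Prop :=
  ∀ p ∈ J, ∀ d ∈ p.support, monomial d (1 : K) ∈ J

lemma _root_.IsMonomialIdeal.mclosed {m : ℕ} {J : Ideal (MvPolynomial (Fin m) K)}
    (hJ : IsMonomialIdeal J) : MClosed J := by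
  obtain ⟨G, rfl⟩ := hJ
  intro p hp d hd
  rw [Ideal.span, Submodule.mem_span_set] at hp
  obtain ⟨c, hc, rfl⟩ := hp
  rw [mem_support_iff, Finsupp.sum, coeff_sum] at hd
  obtain ⟨q, hq, hne⟩ := Finset.exists_ne_zero_of_sum_ne_zero hd
  obtain ⟨g, hg, rfl⟩ := hc hq
  rw [smul_eq_mul, coeff_mul_monomial'] at hne
  split_ifs at hne with hle
  · have hmono : monomial d (1:K) = monomial (d - g) 1 * monomial g 1 := by
      rw [monomial_mul, one_mul, tsub_add_cancel_of_le hle]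
    rw [hmono]
    exact Ideal.mul_mem_left _ _ (Ideal.subset_span ⟨g, hg, rfl⟩)
  · exact absurd rfl hne

lemma span_homog (m s : ℕ) :
    homogeneousSubmodule (Fin m) K s =
      Submodule.span K (((Dset m s).image fun d => monomial d (1 : K)) :
        Finset (MvPolynomial (Fin m) K)) := by
  apply le_antisymm
  · intro p hp
    rw [mem_homogeneousSubmodule] at hp
    rw [p.as_sum]
    apply Submodule.sum_mem
    intro d hd
    have hdeg : d.degree = s := by
      rw [Finsupp.degree_eq_weight_one]
      exact hp (mem_support_iff.mp hd)
    have : monomial d (coeff d p) = coeff d p • monomial d (1:K) := by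
      rw [smul_monomial, smul_eq_mul, mul_one]
    rw [this]
    apply Submodule.smul_mem
    apply Submodule.subset_span
    simp only [Finset.coe_image, Set.mem_image, Finset.mem_coe]
    exact ⟨d, mem_Dset.mpr hdeg, rfl⟩
  · rw [Submodule.span_le]
    intro q hq
    simp only [Finset.coe_image, Set.mem_image, Finset.mem_coe] at hq
    obtain ⟨d, hd, rfl⟩ := hq
    exact isHomogeneous_monomial _ (mem_Dset.mp hd)

lemma span_inf {m s : ℕ} {J : Ideal (MvPolynomial (Fin m) K)} (hJ : MClosed J) :
    (homogeneousSubmodule (Fin m) K s ⊓ Submodule.restrictScalars K J :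
        Submodule K (MvPolynomial (Fin m) K)) =
      Submodule.span K ((((Dset m s).filter fun d => monomial d (1:K) ∈ J).image
        fun d => monomial d (1 : K)) : Finset (MvPolynomial (Fin m) K)) := by
  apply le_antisymm
  · rintro p ⟨hp1, hp2⟩
    rw [SetLike.mem_coe, mem_homogeneousSubmodule] at hp1
    have hp2' : p ∈ J := hp2
    rw [p.as_sum]
    apply Submodule.sum_mem
    intro d hd
    have hdeg : d.degree = s := by
      rw [Finsupp.degree_eq_weight_one]
      exact hp1 (mem_support_iff.mp hd)
    have : monomial d (coeff d p) = coeff d p • monomial d (1:K) := by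
      rw [smul_monomial, smul_eq_mul, mul_one]
    rw [this]
    apply Submodule.smul_mem
    apply Submodule.subset_span
    simp only [Finset.coe_image, Set.mem_image, Finset.mem_coe]
    exact ⟨d, Finset.mem_filter.mpr ⟨mem_Dset.mpr hdeg, hJ p hp2' d hd⟩, rfl⟩
  · rw [Submodule.span_le]
    intro q hq
    simp only [Finset.coe_image, Set.mem_image, Finset.mem_coe] at hq
    obtain ⟨d, hd, rfl⟩ := hq
    rw [Finset.mem_filter] at hd
    exact ⟨isHomogeneous_monomial _ (mem_Dset.mp hd.1), hd.2⟩

lemma finrank_span_monomials {m : ℕ} (D : Finset (Fin m →₀ ℕ)) :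
    Module.finrank K (Submodule.span K ((D.image fun d => monomial d (1 : K)) :
      Set (MvPolynomial (Fin m) K))) = D.card := by
  have h1 : LinearIndependent K (fun x : {x // x ∈ D} => monomial x.1 (1:K)) := by
    have := (basisMonomials (Fin m) K).linearIndependent
    rw [coe_basisMonomials] at this
    exact this.comp _ Subtype.val_injective
  have hset : ((D.image fun d => monomial d (1 : K)) : Set (MvPolynomial (Fin m) K))
      = Set.range (fun x : {x // x ∈ D} => monomial x.1 (1:K)) := by
    ext y
    simp [Set.mem_range, Finset.coe_image]
  rw [hset, finrank_span_eq_card h1, Fintype.card_coe]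

lemma hilb_eq_card {m : ℕ} {J : Ideal (MvPolynomial (Fin m) K)} (hJ : MClosed J) (s : ℕ) :
    hilb J s = ((Dset m s).filter fun d => monomial d (1 : K) ∉ J).card := by
  unfold hilb
  rw [span_inf (s := s) hJ, span_homog (K := K) m s, finrank_span_monomials,
    finrank_span_monomials]
  have h := Finset.card_filter_add_card_filter_not
    (s := Dset m s) (p := fun d => monomial d (1:K) ∈ J)
  omega

lemma mem_sliceIdeal_iff {n : ℕ} {J : Ideal (MvPolynomial (Fin (n+1)) K)} {j : ℕ}
    {e : Fin n →₀ ℕ} :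
    monomial e (1 : K) ∈ sliceIdeal J j ↔ monomial (Finsupp.cons j e) (1 : K) ∈ J := by
  rw [sliceIdeal, Ideal.mem_comap]
  show (rename Fin.succ) (monomial e (1:K)) ∈ _ ↔ _
  rw [rename_monomial, Ideal.mem_colon_span_singleton, X_pow_eq_monomial, monomial_mul, one_mul,
    ← cons_eq_add]

lemma MClosed.slice {n : ℕ} {J : Ideal (MvPolynomial (Fin (n+1)) K)} (hJ : MClosed J) (j : ℕ) :
    MClosed (sliceIdeal J j) := by
  intro p hp d hd
  rw [sliceIdeal, Ideal.mem_comap, Ideal.mem_colon_span_singleton] at hp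
  have hsup : (Finsupp.mapDomain Fin.succ d + Finsupp.single 0 j)
      ∈ ((varShift K n) p * X 0 ^ j).support := by
    rw [mem_support_iff, X_pow_eq_monomial, coeff_mul_monomial', if_pos le_add_self,
      add_tsub_cancel_right, mul_one]
    show coeff _ ((rename Fin.succ) p) ≠ 0
    rw [coeff_rename_mapDomain _ (Fin.succ_injective n)]
    exact mem_support_iff.mp hd
  have hmem := hJ _ hp _ hsup
  rw [sliceIdeal, Ideal.mem_comap]
  show (rename Fin.succ) (monomial d (1:K)) ∈ _
  rw [rename_monomial, Ideal.mem_colon_span_singleton, X_pow_eq_monomial, monomial_mul, one_mul]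
  exact hmem

lemma finSuccEquiv_varShift {n : ℕ} (q : MvPolynomial (Fin n) K) :
    finSuccEquiv K n (varShift K n q) = Polynomial.C q := by
  show finSuccEquiv K n (rename Fin.succ q) = _
  rw [finSuccEquiv_apply, coe_eval₂Hom, eval₂_rename]
  have hg : ((fun i : Fin (n+1) => Fin.cases Polynomial.X
      (fun k : Fin n => (Polynomial.C (X k : MvPolynomial (Fin n) K))) i) ∘ Fin.succ)
      = fun i : Fin n => Polynomial.C (X i : MvPolynomial (Fin n) K) := by
    funext i
    simp
  rw [hg]
  have := MvPolynomial.eval₂_comp_left (Polynomial.C :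
      MvPolynomial (Fin n) K →+* Polynomial (MvPolynomial (Fin n) K))
      (MvPolynomial.C : K →+* MvPolynomial (Fin n) K) X q
  simp only [eval₂_eta] at this
  rw [this]
  rfl

lemma coeff_slice_mem_of_mem_map {n : ℕ} {I : Ideal (MvPolynomial (Fin n) K)}
    {p : MvPolynomial (Fin (n+1)) K} (hp : p ∈ Ideal.map (varShift K n) I) (j : ℕ) :
    (finSuccEquiv K n p).coeff j ∈ I := by
  have hle : I ≤ Ideal.comap (varShift K n)
      (Ideal.comap (finSuccEquiv K n : MvPolynomial (Fin (n+1)) K →+*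
        Polynomial (MvPolynomial (Fin n) K))
        (Ideal.map (Polynomial.C : MvPolynomial (Fin n) K →+* _) I)) := by
    intro q hq
    rw [Ideal.mem_comap, Ideal.mem_comap]
    show finSuccEquiv K n (varShift K n q) ∈ _
    rw [finSuccEquiv_varShift]
    exact Ideal.mem_map_of_mem _ hq
  have h2 := (Ideal.map_le_iff_le_comap.mpr hle) hp
  rw [Ideal.mem_comap] at h2
  exact Ideal.mem_map_C_iff.mp h2 j

lemma tail_mem_of_mem_map {n : ℕ} {I : Ideal (MvPolynomial (Fin n) K)} (hI : MClosed I)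
    {p : MvPolynomial (Fin (n+1)) K} (hp : p ∈ Ideal.map (varShift K n) I)
    {d : Fin (n+1) →₀ ℕ} (hd : d ∈ p.support) :
    monomial (Finsupp.tail d) (1 : K) ∈ I := by
  apply hI _ (coeff_slice_mem_of_mem_map hp (d 0))
  rw [mem_support_iff, finSuccEquiv_coeff_coeff, Finsupp.cons_tail]
  exact mem_support_iff.mp hd

lemma monomial_mem_map_iff {n : ℕ} {I : Ideal (MvPolynomial (Fin n) K)} (hI : MClosed I)
    {d : Fin (n+1) →₀ ℕ} :
    monomial d (1 : K) ∈ Ideal.map (varShift K n) I ↔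
      monomial (Finsupp.tail d) (1 : K) ∈ I := by
  constructor
  · intro h
    apply tail_mem_of_mem_map hI h
    rw [mem_support_iff, coeff_monomial, if_pos rfl]
    exact one_ne_zero
  · intro h
    have heq : monomial d (1:K) = monomial (Finsupp.single 0 (d 0)) 1 *
        (varShift K n) (monomial (Finsupp.tail d) 1) := by
      have hrep : Finsupp.single 0 (d 0) + Finsupp.mapDomain Fin.succ (Finsupp.tail d) = d := by
        conv_rhs => rw [← Finsupp.cons_tail d, cons_eq_add]
        exact add_comm _ _
      show _ = _ * (rename Fin.succ) (monomial (Finsupp.tail d) (1:K))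
      rw [rename_monomial, monomial_mul, one_mul, hrep]
    rw [heq]
    exact Ideal.mul_mem_left _ _ (Ideal.mem_map_of_mem _ h)

lemma MClosed.map {n : ℕ} {I : Ideal (MvPolynomial (Fin n) K)} (hI : MClosed I) :
    MClosed (Ideal.map (varShift K n) I) := by
  intro p hp d hd
  rw [monomial_mem_map_iff hI]
  exact tail_mem_of_mem_map hI hp hd

lemma degree_sub_single_lt {m : ℕ} {d : Fin m →₀ ℕ} {i : Fin m} (hi : 0 < d i) :
    (d - Finsupp.single i 1).degree < d.degree := by
  rw [degree_eq_sum_univ, degree_eq_sum_univ]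
  apply Finset.sum_lt_sum (fun a _ => ?_) ⟨i, Finset.mem_univ i, ?_⟩
  · simp only [Finsupp.coe_tsub, Pi.sub_apply, Finsupp.single_eq_same]
    omega
  · simp only [Finsupp.coe_tsub, Pi.sub_apply]
    exact Nat.sub_le _ _

lemma descent {n α : ℕ} {J : Ideal (MvPolynomial (Fin (n+1)) K)}
    (hmax : ∀ d, IsMinGen J d → d 0 ≤ α) :
    ∀ N (d : Fin (n+1) →₀ ℕ), d.degree ≤ N → monomial d (1:K) ∈ J → α < d 0 →
      monomial (d - Finsupp.single 0 1) (1:K) ∈ J := by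
  intro N
  induction N with
  | zero =>
    intro d hdeg _ hα
    have := zero_le_degree d
    omega
  | succ N ih =>
    intro d hdeg hmem hα
    by_cases hmin : IsMinGen J d
    · have := hmax d hmin
      omega
    · rw [IsMinGen, not_and_or] at hmin
      rcases hmin with h | h
      · exact absurd hmem h
      · push_neg at h
        obtain ⟨i, hi, hmem'⟩ := h
        rcases eq_or_ne i 0 with rfl | hne
        · exact hmem'
        · have hd0 : (d - Finsupp.single i 1 : Fin (n+1) →₀ ℕ) 0 = d 0 := by
            simp only [Finsupp.coe_tsub, Pi.sub_apply, Finsupp.single_eq_of_ne' hne]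
            omega
          have hdeg' : (d - Finsupp.single i 1).degree ≤ N := by
            have := degree_sub_single_lt (d := d) hi
            omega
          have hrec := ih (d - Finsupp.single i 1) hdeg' hmem' (by rw [hd0]; exact hα)
          have key : (d - Finsupp.single i 1 - Finsupp.single 0 1) + Finsupp.single i 1
              = d - Finsupp.single 0 1 := by
            ext a
            rcases eq_or_ne i a with rfl | h1
            · simp only [Finsupp.add_apply, Finsupp.coe_tsub, Pi.sub_apply,
                Finsupp.single_eq_same, Finsupp.single_eq_of_ne' (Ne.symm hne)]
              omega
            · simp only [Finsupp.add_apply, Finsupp.coe_tsub, Pi.sub_apply,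
                Finsupp.single_eq_of_ne' h1]
              omega
          have hfin := Ideal.mul_mem_right (monomial (Finsupp.single i 1) 1) _ hrec
          rwa [monomial_mul, mul_one, key] at hfin

lemma cons_sub_single {n : ℕ} (j : ℕ) (e : Fin n →₀ ℕ) :
    Finsupp.cons (j+1) e - Finsupp.single 0 1 = Finsupp.cons j e := by
  ext a
  refine Fin.cases ?_ (fun i => ?_) a
  · simp only [Finsupp.coe_tsub, Pi.sub_apply, Finsupp.cons_zero, Finsupp.single_eq_same]
    omega
  · simp only [Finsupp.coe_tsub, Pi.sub_apply, Finsupp.cons_succ,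
      Finsupp.single_eq_of_ne' (Fin.succ_ne_zero i).symm]
    omega

lemma cons_succ_eq_single_add {n : ℕ} (j : ℕ) (e : Fin n →₀ ℕ) :
    Finsupp.cons (j+1) e = Finsupp.single 0 1 + Finsupp.cons j e := by
  ext a
  refine Fin.cases ?_ (fun i => ?_) a
  · simp only [Finsupp.add_apply, Finsupp.cons_zero, Finsupp.single_eq_same]
    omega
  · simp only [Finsupp.add_apply, Finsupp.cons_succ,
      Finsupp.single_eq_of_ne' (Fin.succ_ne_zero i).symm]
    omega

lemma mem_cons_iff_of_le {n α : ℕ} {J : Ideal (MvPolynomial (Fin (n+1)) K)}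
    (hmax : ∀ d, IsMinGen J d → d 0 ≤ α) {e : Fin n →₀ ℕ} :
    ∀ {j}, α ≤ j → (monomial (Finsupp.cons j e) (1:K) ∈ J ↔
      monomial (Finsupp.cons α e) (1:K) ∈ J) := by
  intro j
  induction j with
  | zero =>
    intro h
    have : α = 0 := Nat.le_zero.mp h
    subst this
    rfl
  | succ j ih =>
    intro h
    rcases eq_or_lt_of_le h with rfl | hlt
    · rfl
    · have hj : α ≤ j := by omega
      rw [← ih hj]
      constructor
      · intro hmem
        have hd := descent hmax ((Finsupp.cons (j+1) e).degree) _ le_rfl hmem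
          (by rw [Finsupp.cons_zero]; omega)
        rwa [cons_sub_single] at hd
      · intro hmem
        rw [cons_succ_eq_single_add]
        have h2 := Ideal.mul_mem_left _ (monomial (Finsupp.single 0 1) (1:K)) hmem
        rwa [monomial_mul, one_mul] at h2

lemma card_partition {n : ℕ} (s : ℕ) (P : (Fin (n+1) →₀ ℕ) → Prop) :
    ((Dset (n+1) s).filter P).card =
      ∑ j ∈ Finset.range (s+1), ((Dset n (s-j)).filter fun e => P (Finsupp.cons j e)).card := by
  rw [Finset.card_eq_sum_card_fiberwise (f := fun d => d 0) (t := Finset.range (s+1))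
    (fun d hd => by
      rw [Finset.mem_coe, Finset.mem_filter, mem_Dset] at hd
      rw [Finset.mem_coe, Finset.mem_range]
      show d 0 < s + 1
      have := zero_le_degree d
      omega)]
  apply Finset.sum_congr rfl
  intro j hj
  rw [Finset.mem_range] at hj
  apply Finset.card_nbij' (i := fun d => Finsupp.tail d) (j := fun e => Finsupp.cons j e)
  · intro d hd
    simp only [Finset.mem_coe, Finset.mem_filter, mem_Dset] at hd ⊢
    obtain ⟨⟨hdeg, hP⟩, h0⟩ := hd
    have h0 : d 0 = j := h0
    have hdc : d = Finsupp.cons j (Finsupp.tail d) := by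
      rw [← h0, Finsupp.cons_tail]
    constructor
    · rw [hdc] at hdeg
      rw [degree_cons] at hdeg
      omega
    · rw [← hdc]
      exact hP
  · intro e he
    simp only [Finset.mem_coe, Finset.mem_filter, mem_Dset] at he ⊢
    refine ⟨⟨?_, he.2⟩, ?_⟩
    · rw [degree_cons, he.1]
      omega
    · rw [Finsupp.cons_zero]
  · intro d hd
    simp only [Finset.mem_coe, Finset.mem_filter] at hd
    show Finsupp.cons j (Finsupp.tail d) = d
    rw [← hd.2, Finsupp.cons_tail]
  · intro e _
    show Finsupp.tail (Finsupp.cons j e) = e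
    rw [Finsupp.tail_cons]

end HilbAux

open HilbAux in
open scoped Classical in
/-- the Hilbert function formula for the decomposition of a monomial ideal. -/
theorem hilbert_function_decomposition {K : Type} [Field K] {n : ℕ} (α : ℕ)
    (J : Ideal (MvPolynomial (Fin (n + 1)) K))
    (hJ : IsMonomialIdeal J)
    (hex : ∃ d, IsMinGen J d ∧ d 0 = α)
    (hmax : ∀ d, IsMinGen J d → d 0 ≤ α) :
    ∀ s : ℕ, hilb J s =
      (∑ j ∈ Finset.range α, if j ≤ s then hilb (sliceIdeal J j) (s - j) else 0) +
        (if α ≤ s then hilb (Ideal.map (varShift K n) (sliceIdeal J α)) (s - α) else 0) := by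
  intro s
  have hcl : MClosed J := hJ.mclosed
  have hterm : ∀ j : ℕ,
      ((Dset n (s-j)).filter fun e => monomial (Finsupp.cons j e) (1:K) ∉ J).card
        = hilb (sliceIdeal J j) (s-j) := by
    intro j
    rw [hilb_eq_card (hcl.slice j) (s-j)]
    apply congrArg
    apply Finset.filter_congr
    intro e _
    rw [not_iff_not, mem_sliceIdeal_iff]
  have hstart : hilb J s = ∑ j ∈ Finset.range (s+1),
      ((Dset n (s-j)).filter fun e => monomial (Finsupp.cons j e) (1:K) ∉ J).card := by
    rw [hilb_eq_card hcl s]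
    have h := card_partition s (fun d => monomial d (1:K) ∉ J)
    exact ((card_filter_irrel _ _ _ _).trans h).trans
      (Finset.sum_congr rfl (fun j _ => card_filter_irrel _ _ _ _))
  by_cases hs : α ≤ s
  · rw [hstart, if_pos hs, Finset.range_eq_Ico,
      ← Finset.sum_Ico_consecutive _ (Nat.zero_le α) (by omega : α ≤ s + 1),
      ← Finset.range_eq_Ico]
    congr 1
    · apply Finset.sum_congr rfl
      intro j hj
      rw [Finset.mem_range] at hj
      rw [if_pos (by omega : j ≤ s)]
      exact hterm j
    · have hclα : MClosed (sliceIdeal J α) := hcl.slice α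
      have hrhs : hilb (Ideal.map (varShift K n) (sliceIdeal J α)) (s - α)
          = ∑ i ∈ Finset.range (s - α + 1),
            ((Dset n (s - α - i)).filter fun e => monomial e (1:K) ∉ sliceIdeal J α).card := by
        rw [hilb_eq_card hclα.map (s - α)]
        have h2 := card_partition (s - α) (fun d => monomial d (1:K) ∉
          Ideal.map (varShift K n) (sliceIdeal J α))
        refine ((card_filter_irrel _ _ _ _).trans h2).trans ?_
        apply Finset.sum_congr rfl
        intro i _
        apply congrArg
        ext e
        simp only [Finset.mem_filter]
        refine and_congr_right fun _ => not_congr ?_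
        rw [monomial_mem_map_iff hclα, Finsupp.tail_cons]
      rw [hrhs, Finset.sum_Ico_eq_sum_range,
        (by omega : s + 1 - α = s - α + 1)]
      apply Finset.sum_congr rfl
      intro i hi
      rw [Finset.mem_range] at hi
      rw [(by omega : s - (α + i) = s - α - i)]
      apply congrArg
      apply Finset.filter_congr
      intro e _
      rw [not_iff_not, mem_cons_iff_of_le hmax (by omega : α ≤ α + i), mem_sliceIdeal_iff]
  · rw [hstart, if_neg hs, add_zero]
    have hset : Finset.range (s+1) = (Finset.range α).filter (fun j => j ≤ s) := by
      ext x
      simp only [Finset.mem_range, Finset.mem_filter]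
      omega
    rw [hset, Finset.sum_filter]
    apply Finset.sum_congr rfl
    intro j _
    split_ifs with hjs
    · exact hterm j
    · rfl
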